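/- There exists a population protocol whose reachability relation, viewed as a subset of ℕ^d × ℕ^d of pairs of configuration count vectors (C, C') with C →* C', is not semilinear. -/

import Mathlib

/-- A subset of `ℕ^ι` is linear if it is `{b + Σ aᵢxᵢ : aᵢ ∈ ℕ}`. -/
def IsLinearSetNat {ι : Type*} (S : Set (ι → ℕ)) : Prop :=
  ∃ (b : ι → ℕ) (m : ℕ) (x : Fin m → ι → ℕ),
    S = {v | ∃ a : Fin m → ℕ, v = b + ∑ i, a i • x i}

/-- A subset of `ℕ^ι` is semilinear if it is a finite union of linear sets. -/
def IsSemilinearSetNat {ι : Type*} (S : Set (ι → ℕ)) : Prop :=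
  ∃ (k : ℕ) (L : Fin k → Set (ι → ℕ)),
    (∀ i, IsLinearSetNat (L i)) ∧ S = ⋃ i, L i

/-- One step of a population protocol described by count vectors: a rule
`((p,q),(p',q'))` applies to two distinct agents in states `p` and `q` and moves them
to states `p'` and `q'`. -/
def CountStep {Q : Type*} [DecidableEq Q]
    (rules : Finset ((Q × Q) × (Q × Q))) (C C' : Q → ℕ) : Prop :=
  ∃ r ∈ rules,
    (if r.1.1 = r.1.2 then 2 ≤ C r.1.1 else 1 ≤ C r.1.1 ∧ 1 ≤ C r.1.2) ∧
    C' = fun s =>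
      C s - (if s = r.1.1 then 1 else 0) - (if s = r.1.2 then 1 else 0)
          + (if s = r.2.1 then 1 else 0) + (if s = r.2.2 then 1 else 0)

/-! ### Auxiliary development: a Hopcroft–Pansiot style protocol on 8 states.

States `0,1,2,3` are "control" states, `4,5,6,7` play the roles of `a,b,c,d`.
Rules: `1c→2d, 2b→1d, 1a→3b, 3d→4c, 4b→3c, 3a→1b`. -/

def rules8 : Finset ((Fin 8 × Fin 8) × (Fin 8 × Fin 8)) :=
  {((0,6),(1,7)), ((1,5),(0,7)), ((0,4),(2,5)), ((2,7),(3,6)), ((3,5),(2,6)), ((2,4),(0,5))}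

def cfg (n1 n2 n3 n4 a b c d : ℕ) : Fin 8 → ℕ := ![n1,n2,n3,n4,a,b,c,d]

@[simp] lemma cfg_0 (n1 n2 n3 n4 a b c d : ℕ) : cfg n1 n2 n3 n4 a b c d 0 = n1 := rfl
@[simp] lemma cfg_1 (n1 n2 n3 n4 a b c d : ℕ) : cfg n1 n2 n3 n4 a b c d 1 = n2 := rfl
@[simp] lemma cfg_2 (n1 n2 n3 n4 a b c d : ℕ) : cfg n1 n2 n3 n4 a b c d 2 = n3 := rfl
@[simp] lemma cfg_3 (n1 n2 n3 n4 a b c d : ℕ) : cfg n1 n2 n3 n4 a b c d 3 = n4 := rfl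
@[simp] lemma cfg_4 (n1 n2 n3 n4 a b c d : ℕ) : cfg n1 n2 n3 n4 a b c d 4 = a := rfl
@[simp] lemma cfg_5 (n1 n2 n3 n4 a b c d : ℕ) : cfg n1 n2 n3 n4 a b c d 5 = b := rfl
@[simp] lemma cfg_6 (n1 n2 n3 n4 a b c d : ℕ) : cfg n1 n2 n3 n4 a b c d 6 = c := rfl
@[simp] lemma cfg_7 (n1 n2 n3 n4 a b c d : ℕ) : cfg n1 n2 n3 n4 a b c d 7 = d := rfl

lemma S1 (a b c d : ℕ) :
    CountStep rules8 (cfg 1 0 0 0 a b (c+1) d) (cfg 0 1 0 0 a b c (d+1)) := by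
  refine ⟨((0,6),(1,7)), by decide, by simp, ?_⟩
  funext s; fin_cases s <;> simp
lemma S2 (a b c d : ℕ) :
    CountStep rules8 (cfg 0 1 0 0 a (b+1) c d) (cfg 1 0 0 0 a b c (d+1)) := by
  refine ⟨((1,5),(0,7)), by decide, by simp, ?_⟩
  funext s; fin_cases s <;> simp
lemma S3 (a b c d : ℕ) :
    CountStep rules8 (cfg 1 0 0 0 (a+1) b c d) (cfg 0 0 1 0 a (b+1) c d) := by
  refine ⟨((0,4),(2,5)), by decide, by simp, ?_⟩
  funext s; fin_cases s <;> simp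
lemma S4 (a b c d : ℕ) :
    CountStep rules8 (cfg 0 0 1 0 a b c (d+1)) (cfg 0 0 0 1 a b (c+1) d) := by
  refine ⟨((2,7),(3,6)), by decide, by simp, ?_⟩
  funext s; fin_cases s <;> simp
lemma S5 (a b c d : ℕ) :
    CountStep rules8 (cfg 0 0 0 1 a (b+1) c d) (cfg 0 0 1 0 a b (c+1) d) := by
  refine ⟨((3,5),(2,6)), by decide, by simp, ?_⟩
  funext s; fin_cases s <;> simp
lemma S6 (a b c d : ℕ) :
    CountStep rules8 (cfg 0 0 1 0 (a+1) b c d) (cfg 1 0 0 0 a (b+1) c d) := by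
  refine ⟨((2,4),(0,5)), by decide, by simp, ?_⟩
  funext s; fin_cases s <;> simp

abbrev RTG := Relation.ReflTransGen (CountStep rules8)

lemma RTG_cast {C C' D D' : Fin 8 → ℕ} (h : RTG C D) (h1 : C' = C) (h2 : D' = D) :
    RTG C' D' := h1 ▸ h2 ▸ h

lemma cfg_congr {n1 n2 n3 n4 a b c d n1' n2' n3' n4' a' b' c' d' : ℕ}
    (h1 : n1 = n1') (h2 : n2 = n2') (h3 : n3 = n3') (h4 : n4 = n4')
    (ha : a = a') (hb : b = b') (hc : c = c') (hd : d = d') :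
    cfg n1 n2 n3 n4 a b c d = cfg n1' n2' n3' n4' a' b' c' d' := by
  subst h1 h2 h3 h4 ha hb hc hd; rfl

/-- Phase-1 loop: `t` cycles convert `t` c's and `t` b's into `2t` d's. -/
lemma M1 (t : ℕ) : ∀ a b c d : ℕ,
    RTG (cfg 1 0 0 0 a (b+t) (c+t) d) (cfg 1 0 0 0 a b c (d+2*t)) := by
  induction t with
  | zero => intro a b c d; simpa using Relation.ReflTransGen.refl
  | succ t ih =>
    intro a b c d
    refine .head (S1 a (b+t+1) (c+t) d) (.head (S2 a (b+t) (c+t) (d+1)) ?_)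
    exact RTG_cast (ih a b c (d+2)) rfl
      (cfg_congr rfl rfl rfl rfl rfl rfl rfl (by omega))

/-- Phase-3 loop: `t` cycles convert `t` d's and `t` b's into `2t` c's. -/
lemma M3 (t : ℕ) : ∀ a b c d : ℕ,
    RTG (cfg 0 0 1 0 a (b+t) c (d+t)) (cfg 0 0 1 0 a b (c+2*t) d) := by
  induction t with
  | zero => intro a b c d; simpa using Relation.ReflTransGen.refl
  | succ t ih =>
    intro a b c d
    refine .head (S4 a (b+t+1) c (d+t)) (.head (S5 a (b+t) (c+1) (d+t)) ?_)
    exact RTG_cast (ih a b (c+2) d) rfl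
      (cfg_congr rfl rfl rfl rfl rfl rfl (by omega) rfl)

/-- Fuel needed for the doubling run. -/
def Kf : ℕ → ℕ → ℕ
  | 0, c => c
  | (j+1), c => Kf j (4*c) + 3*c - 2

lemma Kf_pos (j : ℕ) : ∀ c, 1 ≤ c → 1 ≤ Kf j c := by
  induction j with
  | zero => intro c hc; simpa [Kf] using hc
  | succ j ih => intro c hc; have := ih (4*c) (by omega); simp only [Kf]; omega

/-- The doubling run: with `2j` a's and `Kf j c` b's of fuel, `c` c's become `2·4^j·c` d's. -/
lemma dbl (j : ℕ) : ∀ B c, 1 ≤ c →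
    RTG (cfg 1 0 0 0 (2*j) (B + Kf j c) c 0) (cfg 1 0 0 0 0 B 0 (2*4^j*c)) := by
  induction j with
  | zero =>
    intro B c hc
    exact RTG_cast (M1 c 0 B 0 0)
      (cfg_congr rfl rfl rfl rfl (by omega) (by simp [Kf]) (by omega) rfl)
      (cfg_congr rfl rfl rfl rfl rfl rfl rfl (by norm_num))
  | succ j ih =>
    intro B c hc
    have hK : 1 ≤ Kf j (4*c) := Kf_pos j (4*c) (by omega)
    set F := Kf j (4*c) with hF
    have t1 : RTG (cfg 1 0 0 0 (2*(j+1)) (B + Kf (j+1) c) c 0)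
        (cfg 1 0 0 0 (2*(j+1)) (B+F+2*c-2) 0 (0+2*c)) :=
      RTG_cast (M1 c (2*(j+1)) (B+F+2*c-2) 0 0)
        (cfg_congr rfl rfl rfl rfl rfl (by simp only [Kf, ← hF]; omega) (by omega) rfl) rfl
    have t2 : RTG (cfg 1 0 0 0 (2*(j+1)) (B+F+2*c-2) 0 (0+2*c))
        (cfg 0 0 1 0 (2*j+1) (B+F+2*c-2+1) 0 (0+2*c)) := by
      refine Relation.ReflTransGen.single ?_
      have h := S3 (2*j+1) (B+F+2*c-2) 0 (0+2*c)
      rwa [cfg_congr rfl rfl rfl rfl (by omega : 2*j+1+1 = 2*(j+1)) rfl rfl rfl] at h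
    have t3 : RTG (cfg 0 0 1 0 (2*j+1) (B+F+2*c-2+1) 0 (0+2*c))
        (cfg 0 0 1 0 (2*j+1) (B+F-1) (0+2*(2*c)) 0) :=
      RTG_cast (M3 (2*c) (2*j+1) (B+F-1) 0 0)
        (cfg_congr rfl rfl rfl rfl rfl (by omega) rfl rfl) rfl
    have t4 : RTG (cfg 0 0 1 0 (2*j+1) (B+F-1) (0+2*(2*c)) 0)
        (cfg 1 0 0 0 (2*j) (B+F) (0+2*(2*c)) 0) := by
      refine Relation.ReflTransGen.single ?_
      have h := S6 (2*j) (B+F-1) (0+2*(2*c)) 0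
      rwa [cfg_congr rfl rfl rfl rfl rfl (by omega : B+F-1+1 = B+F) rfl rfl] at h
    have t5 : RTG (cfg 1 0 0 0 (2*j) (B+F) (0+2*(2*c)) 0)
        (cfg 1 0 0 0 0 B 0 (2*4^(j+1)*c)) :=
      RTG_cast (ih B (4*c) (by omega))
        (cfg_congr rfl rfl rfl rfl rfl rfl (by omega) rfl)
        (cfg_congr rfl rfl rfl rfl rfl rfl rfl (by rw [pow_succ]; ring))
    exact t1.trans (t2.trans (t3.trans (t4.trans t5)))

/-- Number of control agents. -/
def Nc (C : Fin 8 → ℕ) : ℕ := C 0 + C 1 + C 2 + C 3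

/-- Phase-sensitive potential. -/
def Vv (C : Fin 8 → ℕ) : ℕ :=
  C 0 * (C 7 + 2*C 6) + C 1 * (C 7 + 2*C 6 + 1) + C 2 * (C 6 + 2*C 7) + C 3 * (C 6 + 2*C 7 + 1)

set_option maxHeartbeats 1000000 in
lemma stepN {C C' : Fin 8 → ℕ} (h : CountStep rules8 C C') : Nc C' = Nc C := by
  obtain ⟨r, hr, hg, hC'⟩ := h
  fin_cases hr <;>
    · simp at hg
      subst hC'
      simp only [Nc]
      simp (config := { decide := true })
      omega

lemma noStep {C C' : Fin 8 → ℕ} (hN : Nc C = 0) : ¬ CountStep rules8 C C' := by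
  intro ⟨r, hr, hg, _⟩
  simp only [Nc] at hN
  fin_cases hr <;> · simp (config := { decide := true }) at hg; omega

lemma pow_switch {e A B : ℕ} (he : 1 ≤ e) (hAB : A ≤ 2 * B) : 2^(e-1) * A ≤ 2^e * B := by
  calc 2^(e-1)*A ≤ 2^(e-1)*(2*B) := Nat.mul_le_mul_left _ hAB
  _ = 2^(e-1+1)*B := by rw [pow_succ]; ring
  _ = 2^e*B := by congr 2; omega

set_option maxHeartbeats 1000000 in
/-- The key invariant: with a single control agent, `2^a · V` never increases. -/
lemma stepW {C C' : Fin 8 → ℕ} (h : CountStep rules8 C C') (hN : Nc C = 1) :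
    2^(C' 4) * Vv C' ≤ 2^(C 4) * Vv C := by
  obtain ⟨r, hr, hg, hC'⟩ := h
  simp only [Nc] at hN
  fin_cases hr <;>
  · simp (config := { decide := true }) at hg
    subst hC'
    simp only [Vv]
    simp (config := { decide := true })
    rcases (show (C 0 = 1 ∧ C 1 = 0 ∧ C 2 = 0 ∧ C 3 = 0) ∨ (C 1 = 1 ∧ C 0 = 0 ∧ C 2 = 0 ∧ C 3 = 0) ∨
        (C 2 = 1 ∧ C 0 = 0 ∧ C 1 = 0 ∧ C 3 = 0) ∨ (C 3 = 1 ∧ C 0 = 0 ∧ C 1 = 0 ∧ C 2 = 0) from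
        by omega) with ⟨e0,e1,e2,e3⟩|⟨e0,e1,e2,e3⟩|⟨e0,e1,e2,e3⟩|⟨e0,e1,e2,e3⟩ <;>
      simp only [e0,e1,e2,e3] <;>
      first
        | (exfalso; omega)
        | omega
        | exact pow_switch (by omega) (by omega)

lemma rtgN {C C' : Fin 8 → ℕ} (h : RTG C C') : Nc C' = Nc C := by
  induction h with
  | refl => rfl
  | tail _ h2 ih => rw [stepN h2, ih]

lemma rtgEq {C C' : Fin 8 → ℕ} (h : RTG C C') (hN : Nc C = 0) : C' = C := by
  induction h with
  | refl => rfl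
  | @tail b c h1 h2 ih =>
    rw [ih] at h2
    exact absurd h2 (noStep hN)

lemma rtgW {C C' : Fin 8 → ℕ} (h : RTG C C') (hN : Nc C = 1) :
    2^(C' 4) * Vv C' ≤ 2^(C 4) * Vv C := by
  induction h with
  | refl => exact le_rfl
  | @tail b c h1 h2 ih =>
    exact le_trans (stepW h2 ((rtgN h1).trans hN)) ih

/-- There is a population protocol whose reachability relation, viewed as the set of
pairs of count vectors `(C, C')` with `C →* C'`, is not semilinear. -/
theorem exists_protocol_reachability_not_semilinear :
    ∃ (Q : Type) (_ : Fintype Q) (_ : DecidableEq Q)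
      (rules : Finset ((Q × Q) × (Q × Q))),
      ¬ IsSemilinearSetNat
        {v : Q ⊕ Q → ℕ |
          Relation.ReflTransGen (CountStep rules) (fun s => v (Sum.inl s))
            (fun s => v (Sum.inr s))} := by
  refine ⟨Fin 8, inferInstance, inferInstance, rules8, ?_⟩
  rintro ⟨nL, L, hlin, hU⟩
  choose bF nF xF hF using hlin
  set M := (Finset.univ : Finset (Fin nL)).sup (fun i =>
      max ((Finset.univ : Finset (Fin 8 ⊕ Fin 8)).sup (bF i))
        ((Finset.univ : Finset (Fin (nF i))).sup fun j =>
          (Finset.univ : Finset (Fin 8 ⊕ Fin 8)).sup (xF i j))) with hM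
  set m := M + 1 with hm
  clear_value M m
  have hMpow : M < 4^m := by
    calc M < 2^M := Nat.lt_two_pow_self
    _ ≤ 4^M := Nat.pow_le_pow_left (by norm_num) M
    _ ≤ 4^m := Nat.pow_le_pow_right (by norm_num) (by omega)
  -- the tight reachable pair
  have hreach : RTG (cfg 1 0 0 0 (2*m) (Kf m 1) 1 0) (cfg 1 0 0 0 0 0 0 (2*4^m)) :=
    RTG_cast (dbl m 0 1 le_rfl)
      (cfg_congr rfl rfl rfl rfl rfl (by omega) rfl rfl)
      (cfg_congr rfl rfl rfl rfl rfl rfl rfl (by ring))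
  set p : (Fin 8 ⊕ Fin 8) → ℕ :=
    Sum.elim (cfg 1 0 0 0 (2*m) (Kf m 1) 1 0) (cfg 1 0 0 0 0 0 0 (2*4^m)) with hp
  have hpS : p ∈ {v : Fin 8 ⊕ Fin 8 → ℕ |
      Relation.ReflTransGen (CountStep rules8) (fun s => v (Sum.inl s))
        (fun s => v (Sum.inr s))} := hreach
  rw [hU] at hpS
  obtain ⟨i, hpi⟩ := Set.mem_iUnion.mp hpS
  rw [hF i] at hpi
  obtain ⟨av, hav⟩ := hpi
  have hco : ∀ s, p s = bF i s + ∑ j, av j * xF i j s := by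
    intro s
    have h := congrFun hav s
    simpa [Finset.sum_apply] using h
  have hbB : ∀ s, bF i s ≤ M := by
    intro s
    calc bF i s ≤ (Finset.univ : Finset (Fin 8 ⊕ Fin 8)).sup (bF i) :=
          Finset.le_sup (Finset.mem_univ s)
    _ ≤ max ((Finset.univ : Finset (Fin 8 ⊕ Fin 8)).sup (bF i))
          ((Finset.univ : Finset (Fin (nF i))).sup fun j =>
            (Finset.univ : Finset (Fin 8 ⊕ Fin 8)).sup (xF i j)) := le_max_left _ _
    _ ≤ M := by
          rw [hM]
          exact Finset.le_sup (f := fun i => max ((Finset.univ : Finset (Fin 8 ⊕ Fin 8)).sup (bF i))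
            ((Finset.univ : Finset (Fin (nF i))).sup fun j =>
              (Finset.univ : Finset (Fin 8 ⊕ Fin 8)).sup (xF i j))) (Finset.mem_univ i)
  have hxB : ∀ j s, xF i j s ≤ M := by
    intro j s
    calc xF i j s ≤ (Finset.univ : Finset (Fin 8 ⊕ Fin 8)).sup (xF i j) :=
          Finset.le_sup (Finset.mem_univ s)
    _ ≤ (Finset.univ : Finset (Fin (nF i))).sup (fun j =>
          (Finset.univ : Finset (Fin 8 ⊕ Fin 8)).sup (xF i j)) :=
          Finset.le_sup (f := fun j => (Finset.univ : Finset (Fin 8 ⊕ Fin 8)).sup (xF i j))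
            (Finset.mem_univ j)
    _ ≤ max ((Finset.univ : Finset (Fin 8 ⊕ Fin 8)).sup (bF i))
          ((Finset.univ : Finset (Fin (nF i))).sup fun j =>
            (Finset.univ : Finset (Fin 8 ⊕ Fin 8)).sup (xF i j)) := le_max_right _ _
    _ ≤ M := by
          rw [hM]
          exact Finset.le_sup (f := fun i => max ((Finset.univ : Finset (Fin 8 ⊕ Fin 8)).sup (bF i))
            ((Finset.univ : Finset (Fin (nF i))).sup fun j =>
              (Finset.univ : Finset (Fin 8 ⊕ Fin 8)).sup (xF i j))) (Finset.mem_univ i)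
  -- find a generator used with positive a-coordinate on the input side
  have hsum : ∑ j, av j * xF i j (Sum.inl 4) ≠ 0 := by
    have h := hco (Sum.inl 4)
    have hb := hbB (Sum.inl 4)
    have h4 : p (Sum.inl 4) = 2*m := rfl
    omega
  obtain ⟨j0, -, hj0⟩ := Finset.exists_ne_zero_of_sum_ne_zero hsum
  obtain ⟨ha1, ha2⟩ := mul_ne_zero_iff.mp hj0
  have haj : 1 ≤ av j0 := Nat.one_le_iff_ne_zero.mpr ha1
  have hxj : 1 ≤ xF i j0 (Sum.inl 4) := Nat.one_le_iff_ne_zero.mpr ha2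
  -- subtract that generator once
  set a' : Fin (nF i) → ℕ := Function.update av j0 (av j0 - 1) with ha'
  set q : (Fin 8 ⊕ Fin 8) → ℕ := bF i + ∑ j, a' j • xF i j with hq
  have hqS : q ∈ {v : Fin 8 ⊕ Fin 8 → ℕ |
      Relation.ReflTransGen (CountStep rules8) (fun s => v (Sum.inl s))
        (fun s => v (Sum.inr s))} := by
    rw [hU]
    exact Set.mem_iUnion.mpr ⟨i, by rw [hF i]; exact ⟨a', rfl⟩⟩
  have hqco : ∀ s, q s + xF i j0 s = p s := by
    intro s
    have h1 := hco s
    have h2 : q s = bF i s + ∑ j, a' j * xF i j s := by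
      simp [hq, Finset.sum_apply]
    have h3 : ∑ j, a' j * xF i j s + xF i j0 s = ∑ j, av j * xF i j s := by
      rw [← Finset.sum_erase_add _ _ (Finset.mem_univ j0),
          ← Finset.sum_erase_add _ (fun j => av j * xF i j s) (Finset.mem_univ j0)]
      have he : ∑ j ∈ Finset.univ.erase j0, a' j * xF i j s
          = ∑ j ∈ Finset.univ.erase j0, av j * xF i j s :=
        Finset.sum_congr rfl fun j hj => by
          rw [ha', Function.update_of_ne (Finset.ne_of_mem_erase hj)]
      have hu : a' j0 = av j0 - 1 := by rw [ha', Function.update_self]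
      rw [he, hu]
      have hx : (av j0 - 1) * xF i j0 s + xF i j0 s = av j0 * xF i j0 s := by
        obtain ⟨t, ht⟩ : ∃ t, av j0 = t+1 := ⟨av j0 - 1, by omega⟩
        rw [ht]
        simp [Nat.add_sub_cancel, add_mul, one_mul]
      omega
    omega
  -- coordinate facts
  have hv0f : q (Sum.inl 0) + xF i j0 (Sum.inl 0) = 1 := by
    have h := hqco (Sum.inl 0); rwa [show p (Sum.inl 0) = 1 by rw [hp]; rfl] at h
  have hv1f : q (Sum.inl 1) + xF i j0 (Sum.inl 1) = 0 := by
    have h := hqco (Sum.inl 1); rwa [show p (Sum.inl 1) = 0 by rw [hp]; rfl] at h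
  have hv2f : q (Sum.inl 2) + xF i j0 (Sum.inl 2) = 0 := by
    have h := hqco (Sum.inl 2); rwa [show p (Sum.inl 2) = 0 by rw [hp]; rfl] at h
  have hv3f : q (Sum.inl 3) + xF i j0 (Sum.inl 3) = 0 := by
    have h := hqco (Sum.inl 3); rwa [show p (Sum.inl 3) = 0 by rw [hp]; rfl] at h
  have hv4f : q (Sum.inl 4) + xF i j0 (Sum.inl 4) = 2*m := by
    have h := hqco (Sum.inl 4); rwa [show p (Sum.inl 4) = 2*m by rw [hp]; rfl] at h
  have hv6f : q (Sum.inl 6) + xF i j0 (Sum.inl 6) = 1 := by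
    have h := hqco (Sum.inl 6); rwa [show p (Sum.inl 6) = 1 by rw [hp]; rfl] at h
  have hv7f : q (Sum.inl 7) + xF i j0 (Sum.inl 7) = 0 := by
    have h := hqco (Sum.inl 7); rwa [show p (Sum.inl 7) = 0 by rw [hp]; rfl] at h
  have hv0s : q (Sum.inr 0) + xF i j0 (Sum.inr 0) = 1 := by
    have h := hqco (Sum.inr 0); rwa [show p (Sum.inr 0) = 1 by rw [hp]; rfl] at h
  have hv1s : q (Sum.inr 1) + xF i j0 (Sum.inr 1) = 0 := by
    have h := hqco (Sum.inr 1); rwa [show p (Sum.inr 1) = 0 by rw [hp]; rfl] at h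
  have hv2s : q (Sum.inr 2) + xF i j0 (Sum.inr 2) = 0 := by
    have h := hqco (Sum.inr 2); rwa [show p (Sum.inr 2) = 0 by rw [hp]; rfl] at h
  have hv3s : q (Sum.inr 3) + xF i j0 (Sum.inr 3) = 0 := by
    have h := hqco (Sum.inr 3); rwa [show p (Sum.inr 3) = 0 by rw [hp]; rfl] at h
  have hv4s : q (Sum.inr 4) + xF i j0 (Sum.inr 4) = 0 := by
    have h := hqco (Sum.inr 4); rwa [show p (Sum.inr 4) = 0 by rw [hp]; rfl] at h
  have hv6s : q (Sum.inr 6) + xF i j0 (Sum.inr 6) = 0 := by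
    have h := hqco (Sum.inr 6); rwa [show p (Sum.inr 6) = 0 by rw [hp]; rfl] at h
  have hv7s : q (Sum.inr 7) + xF i j0 (Sum.inr 7) = 2*4^m := by
    have h := hqco (Sum.inr 7); rwa [show p (Sum.inr 7) = 2*4^m by rw [hp]; rfl] at h
  have hXb : xF i j0 (Sum.inr 7) ≤ M := hxB _ _
  clear_value q
  -- the perturbed pair is reachable
  have hRq : RTG (fun s => q (Sum.inl s)) (fun s => q (Sum.inr s)) := hqS
  have hNN := rtgN hRq
  simp only [Nc] at hNN
  rcases (show q (Sum.inl 0) = 0 ∨ q (Sum.inl 0) = 1 by omega) with h0 | h0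
  · -- no control agents at all: no step can happen, but endpoints differ
    have hNc0 : Nc (fun s => q (Sum.inl s)) = 0 := by simp only [Nc]; omega
    have heq := rtgEq hRq hNc0
    have h7 : q (Sum.inr 7) = q (Sum.inl 7) := congrFun heq 7
    omega
  · -- exactly one control agent: the potential bound is violated
    have hNc1 : Nc (fun s => q (Sum.inl s)) = 1 := by simp only [Nc]; omega
    have hW := rtgW hRq hNc1
    have hq0s : q (Sum.inr 0) = 1 := by omega
    have z1s : q (Sum.inr 1) = 0 := by omega
    have z2s : q (Sum.inr 2) = 0 := by omega
    have z3s : q (Sum.inr 3) = 0 := by omega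
    have z6s : q (Sum.inr 6) = 0 := by omega
    have z4s : q (Sum.inr 4) = 0 := by omega
    have z1f : q (Sum.inl 1) = 0 := by omega
    have z2f : q (Sum.inl 2) = 0 := by omega
    have z3f : q (Sum.inl 3) = 0 := by omega
    have z7f : q (Sum.inl 7) = 0 := by omega
    have hVs : Vv (fun s => q (Sum.inr s)) = q (Sum.inr 7) := by
      simp only [Vv]
      rw [hq0s, z1s, z2s, z3s, z6s]
      ring_nf
    have hVf : Vv (fun s => q (Sum.inl s)) ≤ 2 := by
      simp only [Vv]
      rw [h0, z1f, z2f, z3f, z7f]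
      simp only [one_mul, zero_mul, mul_zero, add_zero, zero_add, mul_one]
      omega
    have hA4 : q (Sum.inl 4) ≤ 2*m - 1 := by omega
    have hle : 2^(q (Sum.inl 4)) * Vv (fun s => q (Sum.inl s)) ≤ 4^m := by
      calc 2^(q (Sum.inl 4)) * Vv (fun s => q (Sum.inl s)) ≤ 2^(2*m-1) * 2 :=
            Nat.mul_le_mul (Nat.pow_le_pow_right (by norm_num) hA4) hVf
      _ = 4^m := by
          rw [← pow_succ, show 2*m-1+1 = 2*m by omega, show (4:ℕ) = 2^2 by norm_num,
            ← pow_mul]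
    have hWs : q (Sum.inr 7) ≤ 4^m := by
      calc q (Sum.inr 7) = 2^(q (Sum.inr 4)) * Vv (fun s => q (Sum.inr s)) := by
            rw [z4s, hVs]; ring
      _ ≤ 2^(q (Sum.inl 4)) * Vv (fun s => q (Sum.inl s)) := hW
      _ ≤ 4^m := hle
    omega
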